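/- Let $\rho>0$ be small, $\Omega\subset\{x_n\ge 0\}$, and define $w_\delta(x',x_n) = M_\delta x_n + \phi(x) - \tilde\delta|x'|^2 - \frac{\Lambda^n}{(\lambda\tilde\delta)^{n-1}}x_n^2$ where $\tilde\delta = \delta^3/2$ and $M_\delta = \frac{\Lambda^n}{(\lambda\tilde\delta)^{n-1}}$. If $\Phi$ is a symmetric positive semidefinite matrix field with $\mathrm{trace}(\Phi D^2\phi) = n\det D^2\phi \le n\Lambda$ and $\det\Phi = (\det D^2\phi)^{n-1} \ge \lambda^{n-1}$, then $\Phi^{ij}(w_\delta)_{ij} = n\det D^2\phi - 2\tilde\delta\,\mathrm{trace}(\Phi') - \frac{2\Lambda^n}{(\lambda\tilde\delta)^{n-1}}\Phi^{nn}$, where $\Phi'$ is the upper-left $(n-1)\times(n-1)$ block, and by the arithmetic–geometric mean inequality this is $\le n\Lambda - n\big(2^n\tilde\delta^{n-1}\tfrac{\Lambda^n}{(\lambda\tilde\delta)^{n-1}}\det\Phi\big)^{1/n} \le n\Lambda - 2n\Lambda = -n\Lambda$. -/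

import Mathlib

open Matrix Finset

-- trace = sum of eigenvalues (real case)
lemma trace_eq_sum_eig {n : ℕ} {A : Matrix (Fin n) (Fin n) ℝ} (hA : A.IsHermitian) :
    A.trace = ∑ i, hA.eigenvalues i := by
  conv_lhs => rw [hA.spectral_theorem]
  rw [Unitary.conjStarAlgAut_apply, Matrix.trace_mul_cycle, Unitary.coe_star_mul_self hA.eigenvectorUnitary, Matrix.one_mul]
  simp [Matrix.trace_diagonal]

lemma psd_amgm {n : ℕ} (hn : 0 < n) {A : Matrix (Fin n) (Fin n) ℝ} (hA : A.PosSemidef) :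
    (n : ℝ) * A.det ^ ((1 : ℝ) / n) ≤ A.trace := by
  have hev : ∀ i, 0 ≤ hA.1.eigenvalues i := hA.eigenvalues_nonneg
  have hdet : A.det = ∏ i, hA.1.eigenvalues i := by
    have := hA.1.det_eq_prod_eigenvalues
    exact_mod_cast this
  have key := Real.geom_mean_le_arith_mean_weighted Finset.univ (fun _ => 1 / n)
    (fun i => hA.1.eigenvalues i) (fun i _ => by positivity)
    (by simp [Finset.card_univ]; field_simp) (fun i _ => hev i)
  rw [trace_eq_sum_eig hA.1, hdet]
  rw [← Real.finset_prod_rpow _ _ (fun i _ => hev i)] at *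
  calc (n : ℝ) * (∏ i, hA.1.eigenvalues i ^ ((1:ℝ)/n)) ≤ n * ∑ i, (1/n : ℝ) * hA.1.eigenvalues i := by
        apply mul_le_mul_of_nonneg_left key (by positivity)
    _ = ∑ i, hA.1.eigenvalues i := by
        rw [Finset.mul_sum]
        refine Finset.sum_congr rfl fun i _ => ?_
        have hn' : (n : ℝ) ≠ 0 := by positivity
        field_simp

lemma psd_amgm_weighted {n : ℕ} (hn : 0 < n) {A : Matrix (Fin n) (Fin n) ℝ}
    (hA : A.PosSemidef) (a : Fin n → ℝ) (ha : ∀ i, 0 < a i) :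
    (n : ℝ) * ((∏ i, a i) * A.det) ^ ((1 : ℝ) / n) ≤ ∑ i, a i * A i i := by
  set B : Matrix (Fin n) (Fin n) ℝ := Matrix.diagonal (fun i => Real.sqrt (a i)) with hB
  have hBH : Bᴴ = B := by
    simp [hB, Matrix.diagonal_conjTranspose]
  have hM : (B * A * Bᴴ).PosSemidef := hA.mul_mul_conjTranspose_same B
  have hBB : B * B = Matrix.diagonal a := by
    rw [hB, Matrix.diagonal_mul_diagonal]
    exact congrArg Matrix.diagonal (funext fun i => Real.mul_self_sqrt (ha i).le)
  have hdet : (B * A * Bᴴ).det = (∏ i, a i) * A.det := by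
    rw [hBH, Matrix.det_mul, Matrix.det_mul, Matrix.det_diagonal]
    rw [mul_comm, ← mul_assoc, ← Finset.prod_mul_distrib]
    congr 1
    · exact Finset.prod_congr rfl fun i _ => Real.mul_self_sqrt (ha i).le
  have htr : (B * A * Bᴴ).trace = ∑ i, a i * A i i := by
    rw [hBH, Matrix.trace_mul_cycle, hBB]
    simp [Matrix.trace, Matrix.diag, Matrix.diagonal_mul, mul_comm]
  have := psd_amgm hn hM
  rw [hdet, htr] at this
  exact this

/-- Barrier computation (Lemma 4.4): with `δ̃ = δ³/2`,
`c = Λⁿ/(λδ̃)^{n-1}`, and `Hw = Hφ - 2δ̃(I - eₙeₙᵀ) - 2c·eₙeₙᵀ` the Hessian of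
`w_δ = Mδ xₙ + φ - δ̃|x'|² - c xₙ²`, the linearized operator satisfies
`trace(Φ Hw) = n det Hφ - 2δ̃ trace(Φ') - 2c Φⁿⁿ ≤ nΛ - n(2ⁿδ̃^{n-1} c det Φ)^{1/n} ≤ -nΛ`. -/
theorem stmt13 (n : ℕ) (hn : 2 ≤ n) (lam Lam δ : ℝ)
    (hlam : 0 < lam) (hΛ : lam ≤ Lam) (hδ : 0 < δ)
    (δt c Mδ : ℝ) (hδt : δt = δ ^ 3 / 2)
    (hc : c = Lam ^ n / ((lam * δt) ^ (n - 1))) (hMδ : Mδ = c)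
    (en : Fin n) (Φ Hφ Hw : Matrix (Fin n) (Fin n) ℝ)
    (hΦ : Φ.PosSemidef)
    (htr : (Φ * Hφ).trace = n * Hφ.det)
    (hdetΦ : Φ.det = Hφ.det ^ (n - 1))
    (hg1 : lam ≤ Hφ.det) (hg2 : Hφ.det ≤ Lam)
    (hHw : Hw = Hφ
      - (2 * δt) • ((1 : Matrix (Fin n) (Fin n) ℝ) - Matrix.single en en 1)
      - (2 * c) • Matrix.single en en 1) :
    (Φ * Hw).trace
        = n * Hφ.det - 2 * δt * (∑ i ∈ Finset.univ.erase en, Φ i i)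
            - (2 * Lam ^ n / ((lam * δt) ^ (n - 1))) * Φ en en ∧
    (Φ * Hw).trace
        ≤ n * Lam
            - n * ((2 ^ n * δt ^ (n - 1) * (Lam ^ n / ((lam * δt) ^ (n - 1))) * Φ.det)
                ^ ((1 : ℝ) / n)) ∧
    (Φ * Hw).trace ≤ -(n * Lam) := by
  have hn0 : 0 < n := by omega
  have hδt0 : 0 < δt := by rw [hδt]; positivity
  have hLam0 : 0 < Lam := hlam.trans_le hΛ
  have hc0 : 0 < c := by rw [hc]; positivity
  -- trace of Φ * E
  have htrE : (Φ * Matrix.single en en 1).trace = Φ en en := by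
    simp [Matrix.trace, Matrix.diag, Matrix.mul_apply, Matrix.single, Matrix.of_apply,
      ite_and, Finset.sum_ite_eq]
  have hΦtr : Φ.trace = ∑ i, Φ i i := rfl
  have hsum_erase : ∑ i ∈ Finset.univ.erase en, Φ i i = Φ.trace - Φ en en := by
    rw [hΦtr, Finset.sum_erase_eq_sub (Finset.mem_univ en)]
  have heq : (Φ * Hw).trace
      = n * Hφ.det - 2 * δt * (Φ.trace - Φ en en) - 2 * c * Φ en en := by
    rw [hHw]
    simp only [Matrix.mul_sub, Matrix.mul_smul, Matrix.trace_sub, Matrix.trace_smul,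
      Matrix.mul_one, smul_eq_mul, htr, htrE]
  have hpart1 : (Φ * Hw).trace
      = n * Hφ.det - 2 * δt * (∑ i ∈ Finset.univ.erase en, Φ i i)
          - (2 * Lam ^ n / ((lam * δt) ^ (n - 1))) * Φ en en := by
    rw [heq, hsum_erase, hc]; ring
  -- AM-GM setup
  set a : Fin n → ℝ := fun i => if i = en then 2 * c else 2 * δt with ha
  have hapos : ∀ i, 0 < a i := by
    intro i; rw [ha]; dsimp only; split <;> positivity
  have hamgm := psd_amgm_weighted hn0 hΦ a hapos
  have hsum : ∑ i, a i * Φ i i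
      = 2 * c * Φ en en + 2 * δt * (∑ i ∈ Finset.univ.erase en, Φ i i) := by
    rw [← Finset.add_sum_erase Finset.univ (fun i => a i * Φ i i) (Finset.mem_univ en)]
    have : ∑ i ∈ Finset.univ.erase en, a i * Φ i i
        = ∑ i ∈ Finset.univ.erase en, 2 * δt * Φ i i := by
      refine Finset.sum_congr rfl fun i hi => ?_
      rw [ha]; dsimp only
      rw [if_neg (Finset.ne_of_mem_erase hi)]
    rw [this, ha, Finset.mul_sum]
    simp
  have hprod : ∏ i, a i = 2 ^ n * δt ^ (n - 1) * c := by
    rw [← Finset.mul_prod_erase Finset.univ a (Finset.mem_univ en)]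
    have hstep : ∏ i ∈ Finset.univ.erase en, a i = ∏ i ∈ Finset.univ.erase en, (2 * δt) :=
      Finset.prod_congr rfl fun i hi => by
        rw [ha]; dsimp only; rw [if_neg (Finset.ne_of_mem_erase hi)]
    rw [hstep, Finset.prod_const, Finset.card_erase_of_mem (Finset.mem_univ en),
      Finset.card_univ, Fintype.card_fin, ha]
    dsimp only; rw [if_pos rfl, mul_pow]
    have h2 : (2 : ℝ) * 2 ^ (n - 1) = 2 ^ n := by
      rw [← pow_succ']
      congr 1; omega
    rw [← h2]; ring
  have hXeq : (∏ i, a i) * Φ.det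
      = 2 ^ n * δt ^ (n - 1) * (Lam ^ n / ((lam * δt) ^ (n - 1))) * Φ.det := by
    rw [hprod, hc]
  rw [hXeq, hsum] at hamgm
  set X : ℝ := 2 ^ n * δt ^ (n - 1) * (Lam ^ n / ((lam * δt) ^ (n - 1))) * Φ.det with hX
  have hdetpos : 0 < Φ.det := by
    rw [hdetΦ]; exact pow_pos (hlam.trans_le hg1) _
  have hpart2 : (Φ * Hw).trace ≤ n * Lam - n * (X ^ ((1 : ℝ) / n)) := by
    rw [heq]
    rw [hsum_erase] at hamgm
    have h1 : (n : ℝ) * Hφ.det ≤ n * Lam :=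
      mul_le_mul_of_nonneg_left hg2 (by positivity)
    linarith
  -- part 3
  have hXge : (2 * Lam) ^ n ≤ X := by
    have h1 : X = (2 * Lam) ^ n * (Φ.det / lam ^ (n - 1)) := by
      rw [hX, mul_pow, mul_pow]
      have hδtp : δt ^ (n - 1) ≠ 0 := by positivity
      have hlamp : lam ^ (n - 1) ≠ 0 := by positivity
      field_simp
    rw [h1]
    have h2 : (1 : ℝ) ≤ Φ.det / lam ^ (n - 1) := by
      rw [le_div_iff₀ (by positivity), one_mul, hdetΦ]
      exact pow_le_pow_left₀ hlam.le hg1 _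
    nlinarith [pow_pos (by linarith : (0:ℝ) < 2 * Lam) n]
  have hroot : 2 * Lam ≤ X ^ ((1 : ℝ) / n) := by
    have hbase : ((2 * Lam) ^ n : ℝ) ^ ((1 : ℝ) / n) = 2 * Lam := by
      rw [← Real.rpow_natCast (2 * Lam) n, ← Real.rpow_mul (by positivity)]
      rw [mul_one_div, div_self (by positivity : (n : ℝ) ≠ 0), Real.rpow_one]
    calc 2 * Lam = ((2 * Lam) ^ n : ℝ) ^ ((1 : ℝ) / n) := hbase.symm
      _ ≤ X ^ ((1 : ℝ) / n) := Real.rpow_le_rpow (by positivity) hXge (by positivity)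
  have hpart3 : (Φ * Hw).trace ≤ -(n * Lam) := by
    have h1 : (n : ℝ) * (2 * Lam) ≤ n * (X ^ ((1 : ℝ) / n)) :=
      mul_le_mul_of_nonneg_left hroot (by positivity)
    linarith
  exact ⟨hpart1, hpart2, hpart3⟩
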